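/- Let A ∈ B(E,F) have generalized inverse A⁺ and let T ∈ B(E,F) with ‖T − A‖ < ‖A⁺‖⁻¹. Then R(T) ∩ N(A⁺) = {0} if and only if F = R(T) ⊕ N(A⁺). -/

import Mathlib

theorem stmt_3 {E F : Type*} [NormedAddCommGroup E] [NormedSpace ℝ E] [CompleteSpace E]
    [NormedAddCommGroup F] [NormedSpace ℝ F] [CompleteSpace F]
    (A T : E →L[ℝ] F) (Ap : F →L[ℝ] E)
    (h1 : A ∘L Ap ∘L A = A) (h2 : Ap ∘L A ∘L Ap = Ap)
    (hT : ‖T - A‖ < ‖Ap‖⁻¹) :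
    LinearMap.range (T : E →ₗ[ℝ] F) ⊓ LinearMap.ker (Ap : F →ₗ[ℝ] E) = ⊥ ↔
      IsCompl (LinearMap.range (T : E →ₗ[ℝ] F)) (LinearMap.ker (Ap : F →ₗ[ℝ] E)) := by
  have hApnorm : (0:ℝ) < ‖Ap‖ := by
    rcases lt_or_eq_of_le (norm_nonneg Ap) with h | h
    · exact h
    · exfalso
      rw [← h] at hT
      simp at hT
      exact absurd hT (not_lt.2 (norm_nonneg _))
  set C := Ap ∘L (T - A) with hCdef
  have hC : ‖C‖ < 1 := by
    calc ‖C‖ ≤ ‖Ap‖ * ‖T - A‖ := ContinuousLinearMap.opNorm_comp_le _ _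
      _ < ‖Ap‖ * ‖Ap‖⁻¹ := mul_lt_mul_of_pos_left hT hApnorm
      _ = 1 := mul_inv_cancel₀ (ne_of_gt hApnorm)
  have h2' : ∀ z, Ap (A (Ap z)) = Ap z := fun z => by
    have := DFunLike.congr_fun h2 z
    simpa using this
  have hcodis : Codisjoint (LinearMap.range (T : E →ₗ[ℝ] F)) (LinearMap.ker (Ap : F →ₗ[ℝ] E)) := by
    rw [codisjoint_iff, eq_top_iff]
    intro y _
    set u : (E →L[ℝ] E)ˣ := Units.oneSub (-C) (by simpa using hC) with hu
    set x := (↑u⁻¹ : E →L[ℝ] E) (Ap y) with hxdef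
    have hx : x + C x = Ap y := by
      have h := congrArg (fun f : E →L[ℝ] E => f (Ap y)) u.mul_inv
      simp only [hu, Units.oneSub, ContinuousLinearMap.mul_apply, ContinuousLinearMap.one_apply,
        sub_neg_eq_add] at h
      simp only [ContinuousLinearMap.add_apply, ContinuousLinearMap.one_apply] at h
      rw [hxdef]
      convert h using 2 <;> rfl
    have hCx : C x = Ap (T x) - Ap (A x) := by
      simp [hCdef, map_sub]
    have hACx : Ap (A (C x)) = C x := by
      have : C x = Ap ((T - A) x) := by simp [hCdef]
      rw [this, h2']
    have happ : Ap (A x) + Ap (A (C x)) = Ap y := by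
      have h := congrArg (fun z => Ap (A z)) hx
      simpa [map_add, h2'] using h
    rw [hACx, hCx] at happ
    have hATx : Ap (T x) = Ap y := by
      have := happ
      rw [add_sub_cancel] at this
      exact this
    have hy : y = T x + (y - T x) := by abel
    rw [hy]
    exact Submodule.add_mem_sup ⟨x, rfl⟩
      (by simp [LinearMap.mem_ker, map_sub, hATx])
  constructor
  · intro hinf
    exact ⟨disjoint_iff.mpr hinf, hcodis⟩
  · intro hcompl
    exact disjoint_iff.mp hcompl.disjoint
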